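/- Let T = R/Z, j ≠ 0, 0 < α ≤ 2, c_j = (j²/2)^{1/α}, V continuous on T, and G(x) = p_0 + ∑_{k=1}^n (p_k cos(2πkx) + q_k sin(2πkx)). Suppose m : T → R is continuous, positive, with ∫_T m = 1, and (m, H̄) solves j²/(2 m(x)^α) + V(x) = ∫_T G(x−y) m(y) dy + H̄ for all x. Then there exist real coefficients a_0*, ..., a_n*, b_1*, ..., b_n* such that m(x) = c_j / (a_0* + ∑_{k=1}^n (a_k* cos(2πkx) + b_k* sin(2πkx)) − V(x))^{1/α} for all x, H̄ = a_0* − p_0, and the denominator is strictly positive on T. -/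

import Mathlib

open Real

theorem stmt_17 (n : ℕ) (p q : ℕ → ℝ) (V G : ℝ → ℝ)
    (hV : Continuous V) (hVper : Function.Periodic V 1)
    (hG : ∀ x : ℝ, G x = p 0 + ∑ k ∈ Finset.Icc 1 n,
      (p k * Real.cos (2 * π * k * x) + q k * Real.sin (2 * π * k * x)))
    (j α : ℝ) (hj : j ≠ 0) (hα0 : 0 < α) (hα2 : α ≤ 2)
    (cj : ℝ) (hcj : cj = (j ^ 2 / 2) ^ ((1:ℝ) / α))
    (m : ℝ → ℝ) (H : ℝ) (hm : Continuous m) (hmper : Function.Periodic m 1)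
    (hmpos : ∀ x, 0 < m x) (hm1 : (∫ x in (0:ℝ)..1, m x) = 1)
    (heq : ∀ x : ℝ, j ^ 2 / (2 * m x ^ α) + V x = (∫ y in (0:ℝ)..1, G (x - y) * m y) + H) :
    ∃ a b : ℕ → ℝ,
      (∀ x : ℝ, 0 < a 0 + (∑ k ∈ Finset.Icc 1 n,
        (a k * Real.cos (2 * π * k * x) + b k * Real.sin (2 * π * k * x))) - V x) ∧
      (∀ x : ℝ, m x = cj / (a 0 + (∑ k ∈ Finset.Icc 1 n,
        (a k * Real.cos (2 * π * k * x) + b k * Real.sin (2 * π * k * x))) - V x) ^ ((1:ℝ) / α)) ∧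
      H = a 0 - p 0 := by
  classical
  set C : ℕ → ℝ := fun k => ∫ y in (0:ℝ)..1, Real.cos (2*π*k*y) * m y with hCdef
  set S : ℕ → ℝ := fun k => ∫ y in (0:ℝ)..1, Real.sin (2*π*k*y) * m y with hSdef
  have hic : ∀ k : ℕ, IntervalIntegrable (fun y => Real.cos (2*π*(k:ℝ)*y) * m y)
      MeasureTheory.volume 0 1 := fun k =>
    ((Real.continuous_cos.comp (by continuity)).mul hm).intervalIntegrable 0 1
  have his : ∀ k : ℕ, IntervalIntegrable (fun y => Real.sin (2*π*(k:ℝ)*y) * m y)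
      MeasureTheory.volume 0 1 := fun k =>
    ((Real.continuous_sin.comp (by continuity)).mul hm).intervalIntegrable 0 1
  have hint : ∀ x : ℝ, (∫ y in (0:ℝ)..1, G (x - y) * m y)
      = p 0 + ∑ k ∈ Finset.Icc 1 n,
        ((p k * C k - q k * S k) * Real.cos (2*π*k*x)
          + (p k * S k + q k * C k) * Real.sin (2*π*k*x)) := by
    intro x
    have hpt : ∀ y : ℝ, G (x - y) * m y
        = p 0 * m y + ∑ k ∈ Finset.Icc 1 n,
          ((p k * Real.cos (2*π*k*x) + q k * Real.sin (2*π*k*x)) * (Real.cos (2*π*k*y) * m y)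
            + (p k * Real.sin (2*π*k*x) - q k * Real.cos (2*π*k*x)) * (Real.sin (2*π*k*y) * m y)) := by
      intro y
      rw [hG, add_mul, Finset.sum_mul]
      congr 1
      refine Finset.sum_congr rfl fun k _ => ?_
      have h1 : 2*π*(k:ℝ)*(x - y) = 2*π*k*x - 2*π*k*y := by ring
      rw [h1, Real.cos_sub, Real.sin_sub]
      ring
    rw [intervalIntegral.integral_congr (fun y _ => hpt y)]
    have h2int : IntervalIntegrable (fun y : ℝ => ∑ k ∈ Finset.Icc 1 n,
        ((p k * Real.cos (2*π*k*x) + q k * Real.sin (2*π*k*x)) * (Real.cos (2*π*k*y) * m y)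
          + (p k * Real.sin (2*π*k*x) - q k * Real.cos (2*π*k*x)) * (Real.sin (2*π*k*y) * m y)))
        MeasureTheory.volume 0 1 := by
      apply Continuous.intervalIntegrable
      exact continuous_finset_sum _ fun k _ => by fun_prop
    rw [intervalIntegral.integral_add
      ((show Continuous (fun y : ℝ => p 0 * m y) from continuous_const.mul hm).intervalIntegrable 0 1) h2int]
    rw [intervalIntegral.integral_const_mul, hm1, mul_one]
    rw [intervalIntegral.integral_finset_sum (fun k _ =>
        (((hic k).const_mul _).add ((his k).const_mul _)))]
    congr 1
    refine Finset.sum_congr rfl fun k _ => ?_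
    rw [intervalIntegral.integral_add ((hic k).const_mul _) ((his k).const_mul _),
      intervalIntegral.integral_const_mul, intervalIntegral.integral_const_mul]
    show _ * C k + _ * S k = _
    ring
  set A : ℕ → ℝ := fun k => if k = 0 then p 0 + H else p k * C k - q k * S k with hAdef
  set B : ℕ → ℝ := fun k => p k * S k + q k * C k with hBdef
  have hA0 : A 0 = p 0 + H := if_pos rfl
  have hDx : ∀ x : ℝ, A 0 + (∑ k ∈ Finset.Icc 1 n,
      (A k * Real.cos (2 * π * k * x) + B k * Real.sin (2 * π * k * x))) - V x
      = j ^ 2 / (2 * m x ^ α) := by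
    intro x
    have h2 : ∑ k ∈ Finset.Icc 1 n,
        (A k * Real.cos (2 * π * k * x) + B k * Real.sin (2 * π * k * x))
        = ∑ k ∈ Finset.Icc 1 n, ((p k * C k - q k * S k) * Real.cos (2*π*k*x)
          + (p k * S k + q k * C k) * Real.sin (2*π*k*x)) := by
      refine Finset.sum_congr rfl fun k hk => ?_
      have hk0 : k ≠ 0 := by
        have := (Finset.mem_Icc.mp hk).1; omega
      simp [hAdef, hBdef, if_neg hk0]
    have h3 := heq x
    rw [hint x] at h3
    rw [hA0, h2]
    linarith
  have hmα : ∀ x : ℝ, (0:ℝ) < m x ^ α := fun x => Real.rpow_pos_of_pos (hmpos x) α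
  have hjsq : (0:ℝ) < j ^ 2 := sq_pos_of_ne_zero hj
  have hDpos : ∀ x : ℝ, (0:ℝ) < j ^ 2 / (2 * m x ^ α) := fun x =>
    div_pos hjsq (by have := hmα x; positivity)
  refine ⟨A, B, fun x => (hDx x) ▸ hDpos x, fun x => ?_, by rw [hA0]; ring⟩
  rw [hDx x]
  have hj2 : (0:ℝ) < j ^ 2 / 2 := by linarith
  have h4 : j ^ 2 / (2 * m x ^ α) = (j ^ 2 / 2) / (m x ^ α) := by
    rw [div_div]
  rw [h4, Real.div_rpow hj2.le (hmα x).le, ← Real.rpow_mul (hmpos x).le,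
    mul_one_div_cancel hα0.ne', Real.rpow_one, ← hcj]
  have hcjpos : (0:ℝ) < cj := by
    rw [hcj]; exact Real.rpow_pos_of_pos hj2 _
  field_simp
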